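/- Let L be a Lie ring whose derived ideal L' = [L, L] is abelian, and let x ∈ L be such that ad_x restricts to a bijection of L' onto itself. Then L = L' ⊕ C_L(x) as additive groups (L = L' + C_L(x) and L' ∩ C_L(x) = 0), the centralizer C_L(x) is an abelian subring, and C_L(x) is self-normalizing; hence C_L(x) is a Cartan subring of L. -/
import Mathlib


/-- Let `L` be a Lie ring with abelian derived ideal `L'` and let `x ∈ L` be
such that `ad_x` restricts to a bijection of `L'` onto itself.  Then `L = L' ⊕ C_L(x)` as
additive groups, `C_L(x)` is an abelian subring, and `C_L(x)` is self-normalizing; hence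
`C_L(x)` is a Cartan subring of `L`. -/
theorem stmt_4 {L : Type*} [LieRing L]
    (habel : ∀ a ∈ LieAlgebra.derivedSeries ℤ L 1, ∀ b ∈ LieAlgebra.derivedSeries ℤ L 1,
      ⁅a, b⁆ = (0 : L))
    (x : L)
    (hmaps : ∀ z ∈ LieAlgebra.derivedSeries ℤ L 1, ⁅x, z⁆ ∈ LieAlgebra.derivedSeries ℤ L 1)
    (hinj : ∀ z ∈ LieAlgebra.derivedSeries ℤ L 1, ∀ w ∈ LieAlgebra.derivedSeries ℤ L 1,
      ⁅x, z⁆ = ⁅x, w⁆ → z = w)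
    (hsurj : ∀ w ∈ LieAlgebra.derivedSeries ℤ L 1,
      ∃ z ∈ LieAlgebra.derivedSeries ℤ L 1, ⁅x, z⁆ = w) :
    -- L = L' + C_L(x)
    (∀ y : L, ∃ z ∈ LieAlgebra.derivedSeries ℤ L 1, ∃ c : L, ⁅x, c⁆ = 0 ∧ y = z + c) ∧
    -- L' ∩ C_L(x) = 0
    (∀ z ∈ LieAlgebra.derivedSeries ℤ L 1, ⁅x, z⁆ = 0 → z = 0) ∧
    -- C_L(x) is an abelian, self-normalizing subring (i.e. a Cartan subring)
    (∃ c : LieSubalgebra ℤ L, (c : Set L) = {y : L | ⁅x, y⁆ = 0} ∧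
      (∀ a ∈ c, ∀ b ∈ c, ⁅a, b⁆ = (0 : L)) ∧ c.normalizer = c) := by
  -- everything is in L'
  have hbr : ∀ a b : L, ⁅a, b⁆ ∈ LieAlgebra.derivedSeries ℤ L 1 := by
    intro a b
    rw [LieAlgebra.derivedSeries_def, LieAlgebra.derivedSeriesOfIdeal_succ,
      LieAlgebra.derivedSeriesOfIdeal_zero]
    exact LieSubmodule.lie_mem_lie (LieSubmodule.mem_top a) (LieSubmodule.mem_top b)
  -- triviality of the intersection
  have hker : ∀ z ∈ LieAlgebra.derivedSeries ℤ L 1, ⁅x, z⁆ = 0 → z = 0 := by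
    intro z hz h
    exact hinj z hz 0 (LieSubmodule.zero_mem _) (by simpa using h)
  -- decomposition
  have hdec : ∀ y : L, ∃ z ∈ LieAlgebra.derivedSeries ℤ L 1,
      ∃ c : L, ⁅x, c⁆ = 0 ∧ y = z + c := by
    intro y
    obtain ⟨z, hz, hzx⟩ := hsurj ⁅x, y⁆ (hbr x y)
    refine ⟨z, hz, y - z, ?_, by abel⟩
    rw [lie_sub, hzx, sub_self]
  refine ⟨hdec, hker, ?_⟩
  -- the centralizer as a Lie subalgebra
  refine ⟨{ carrier := {y : L | ⁅x, y⁆ = 0}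
            add_mem' := by intro a b ha hb; simp only [Set.mem_setOf_eq] at *
                           rw [lie_add, ha, hb, add_zero]
            zero_mem' := by simp
            smul_mem' := by intro t a ha; simp only [Set.mem_setOf_eq] at *
                            rw [lie_smul, ha, smul_zero]
            lie_mem' := by intro a b ha hb; simp only [Set.mem_setOf_eq] at *
                           rw [leibniz_lie, ha, hb, lie_zero, zero_lie, add_zero] },
         rfl, ?_, ?_⟩
  · -- abelian
    intro a ha b hb
    simp only [LieSubalgebra.mem_mk_iff, Set.mem_setOf_eq] at ha hb
    exact hker ⁅a, b⁆ (hbr a b) (by rw [leibniz_lie, ha, hb, lie_zero, zero_lie, add_zero])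
  · -- self-normalizing
    refine le_antisymm ?_ (LieSubalgebra.le_normalizer _)
    intro y hy
    rw [LieSubalgebra.mem_normalizer_iff] at hy
    have hx : ⁅x, x⁆ = (0 : L) := lie_self x
    have := hy x hx
    -- this : ⁅y, x⁆ ∈ centralizer, i.e. ⁅x, ⁅y, x⁆⁆ = 0
    change ⁅x, ⁅y, x⁆⁆ = 0 at this
    have h2 : ⁅y, x⁆ = 0 := hker ⁅y, x⁆ (hbr y x) this
    show ⁅x, y⁆ = 0
    rw [← lie_skew, h2, neg_zero]
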